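/- Let L/K be a cyclic Galois extension of degree n with Galois group generated by σ, let 1 ≤ k ≤ n, and let w = Σ_{i=0}^k b_i t^i ∈ L[t] be a polynomial of degree k (b_k ≠ 0). Let R = {x ∈ L : b₀x + b₁σ(x) + ⋯ + b_kσ^k(x) = 0}. Then R is a K-subspace of L and dim_K R ≤ k. -/

import Mathlib

variable {K L : Type*} [Field K] [Field L] [Algebra K L]

/-- The `K`-linear operator `w(σ)` on `L` associated to a polynomial `w ∈ L[t]`,
namely `x ↦ ∑ i, (coeff of tⁱ in w) * σⁱ(x)`. -/
noncomputable def polyOp (σ : L ≃ₐ[K] L) (w : Polynomial L) : L →ₗ[K] L :=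
  ∑ i ∈ Finset.range (w.natDegree + 1),
    (LinearMap.mulLeft K (w.coeff i)).comp ((σ ^ i : L ≃ₐ[K] L).toLinearMap)

/-- Auxiliary: the operator attached to a coefficient function `b` and a degree bound `k`. -/
noncomputable def opC (σ : L ≃ₐ[K] L) (b : ℕ → L) (k : ℕ) : L →ₗ[K] L :=
  ∑ i ∈ Finset.range (k + 1),
    (LinearMap.mulLeft K (b i)).comp ((σ ^ i : L ≃ₐ[K] L).toLinearMap)

lemma opC_apply (σ : L ≃ₐ[K] L) (b : ℕ → L) (k : ℕ) (x : L) :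
    opC σ b k x = ∑ i ∈ Finset.range (k + 1), b i * (σ ^ i : L ≃ₐ[K] L) x := by
  simp [opC]

lemma finrank_ker_comp_le [FiniteDimensional K L] (f g : L →ₗ[K] L) :
    Module.finrank K (LinearMap.ker (f ∘ₗ g)) ≤
      Module.finrank K (LinearMap.ker f) + Module.finrank K (LinearMap.ker g) := by
  have hmem : ∀ x ∈ LinearMap.ker (f ∘ₗ g), g x ∈ LinearMap.ker f := by
    intro x hx
    simpa [LinearMap.mem_ker] using hx
  set h : LinearMap.ker (f ∘ₗ g) →ₗ[K] LinearMap.ker f := g.restrict hmem with hh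
  have hrn := LinearMap.finrank_range_add_finrank_ker h
  have h1 : Module.finrank K (LinearMap.range h) ≤ Module.finrank K (LinearMap.ker f) :=
    Submodule.finrank_le _
  have h2 : Module.finrank K (LinearMap.ker h) ≤ Module.finrank K (LinearMap.ker g) := by
    have hinj : Function.Injective
        (LinearMap.codRestrict (LinearMap.ker g)
          (((LinearMap.ker (f ∘ₗ g)).subtype).comp (LinearMap.ker h).subtype)
          (by
            intro x
            have hx : h x.1 = 0 := x.2
            have hgx : g x.1.1 = 0 := congrArg Subtype.val hx
            exact LinearMap.mem_ker.mpr hgx)) := by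
      intro a b hab
      have := congrArg Subtype.val hab
      exact Subtype.ext (Subtype.ext this)
    exact LinearMap.finrank_le_finrank_of_injective hinj
  omega

lemma fixed_zpow (σ : L ≃ₐ[K] L) {y : L} (h : σ y = y) (m : ℤ) : (σ ^ m) y = y := by
  have hn : ∀ n : ℕ, (σ ^ n) y = y := by
    intro n
    induction n with
    | zero => simp
    | succ n ih => rw [pow_succ, AlgEquiv.mul_apply, h, ih]
  cases m with
  | ofNat n => simpa using hn n
  | negSucc n =>
    rw [zpow_negSucc]
    conv_lhs => rw [← hn (n + 1)]
    exact (σ ^ (n + 1)).symm_apply_apply y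

lemma opC_ker_le [FiniteDimensional K L] [IsGalois K L]
    (σ : L ≃ₐ[K] L) (hgen : ∀ τ : L ≃ₐ[K] L, τ ∈ Subgroup.zpowers σ) :
    ∀ k (b : ℕ → L), b k ≠ 0 → Module.finrank K (LinearMap.ker (opC σ b k)) ≤ k := by
  intro k
  induction k with
  | zero =>
    intro b hb
    have : LinearMap.ker (opC σ b 0) = ⊥ := by
      rw [LinearMap.ker_eq_bot']
      intro x hx
      have hx' : b 0 * x = 0 := by simpa [opC_apply] using hx
      rcases mul_eq_zero.mp hx' with h | h
      · exact absurd h hb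
      · exact h
    simp [this]
  | succ k ih =>
    intro b hb
    by_cases hker : LinearMap.ker (opC σ b (k + 1)) = ⊥
    · rw [hker]
      simp
    obtain ⟨z, hzmem, hz0⟩ := Submodule.exists_mem_ne_zero_of_ne_bot hker
    set c : L := σ z * z⁻¹ with hc
    set q : ℕ → L := fun i => ∑ j ∈ Finset.Ioc i (k + 1),
      b j * ∏ l ∈ Finset.Ico (i + 1) j, (σ ^ l : L ≃ₐ[K] L) c with hq
    -- q (k+1) = 0 and the recurrence
    have hqtop : q (k + 1) = 0 := by simp [hq]
    have hrec : ∀ i ≤ k, q i = b (i + 1) + q (i + 1) * (σ ^ (i + 1) : L ≃ₐ[K] L) c := by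
      intro i hi
      have hins : Finset.Ioc i (k + 1) = insert (i + 1) (Finset.Ioc (i + 1) (k + 1)) := by
        ext m
        simp only [Finset.mem_Ioc, Finset.mem_insert]
        omega
      rw [hq]
      simp only
      rw [hins, Finset.sum_insert (by simp)]
      congr 1
      · simp
      · rw [Finset.sum_mul]
        apply Finset.sum_congr rfl
        intro j hj
        have hj' : i + 1 < j := (Finset.mem_Ioc.mp hj).1
        have hins2 : Finset.Ico (i + 1) j = insert (i + 1) (Finset.Ico (i + 2) j) := by
          ext m
          simp only [Finset.mem_Ico, Finset.mem_insert]
          omega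
        rw [hins2, Finset.prod_insert (by simp), mul_assoc]
        ring
    have hqk : q k = b (k + 1) := by
      rw [hrec k le_rfl, hqtop]
      ring
    -- the companion first-order operator
    set g : L →ₗ[K] L := σ.toLinearMap - LinearMap.mulLeft K c with hg
    have hgapp : ∀ x : L, g x = σ x - c * x := by
      intro x; simp [hg]
    -- pointwise division identity
    have hpt : ∀ x : L, opC σ b (k + 1) x = opC σ q k (g x) + (b 0 + q 0 * c) * x := by
      intro x
      rw [hgapp, opC_apply, opC_apply]
      have hexp : ∀ i : ℕ, q i * (σ ^ i : L ≃ₐ[K] L) (σ x - c * x)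
          = q i * (σ ^ (i + 1) : L ≃ₐ[K] L) x
            - q i * (σ ^ i : L ≃ₐ[K] L) c * (σ ^ i : L ≃ₐ[K] L) x := by
        intro i
        rw [map_sub, map_mul, pow_succ, AlgEquiv.mul_apply]
        ring
      simp only [hexp]
      rw [Finset.sum_sub_distrib]
      set A := ∑ i ∈ Finset.range (k + 1), q i * (σ ^ (i + 1) : L ≃ₐ[K] L) x with hA
      set S := ∑ i ∈ Finset.range (k + 1),
        q i * (σ ^ i : L ≃ₐ[K] L) c * (σ ^ i : L ≃ₐ[K] L) x with hS
      -- expand LHS using the recurrence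
      have hL : ∑ i ∈ Finset.range (k + 2), b i * (σ ^ i : L ≃ₐ[K] L) x
          = (∑ i ∈ Finset.range (k + 1), b (i + 1) * (σ ^ (i + 1) : L ≃ₐ[K] L) x)
            + b 0 * (σ ^ 0 : L ≃ₐ[K] L) x :=
        Finset.sum_range_succ' _ (k + 1)
      have hb' : ∀ i ∈ Finset.range (k + 1),
          b (i + 1) * (σ ^ (i + 1) : L ≃ₐ[K] L) x
          = q i * (σ ^ (i + 1) : L ≃ₐ[K] L) x
            - q (i + 1) * (σ ^ (i + 1) : L ≃ₐ[K] L) c * (σ ^ (i + 1) : L ≃ₐ[K] L) x := by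
        intro i hi
        have : b (i + 1) = q i - q (i + 1) * (σ ^ (i + 1) : L ≃ₐ[K] L) c := by
          rw [hrec i (by simpa using Nat.lt_succ_iff.mp (Finset.mem_range.mp hi))]
          ring
        rw [this]; ring
      have hshift : ∑ i ∈ Finset.range (k + 1),
          q (i + 1) * (σ ^ (i + 1) : L ≃ₐ[K] L) c * (σ ^ (i + 1) : L ≃ₐ[K] L) x
          = S - q 0 * (σ ^ 0 : L ≃ₐ[K] L) c * (σ ^ 0 : L ≃ₐ[K] L) x := by
        have h1 : ∑ i ∈ Finset.range (k + 2),
            q i * (σ ^ i : L ≃ₐ[K] L) c * (σ ^ i : L ≃ₐ[K] L) x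
            = (∑ i ∈ Finset.range (k + 1),
                q (i + 1) * (σ ^ (i + 1) : L ≃ₐ[K] L) c * (σ ^ (i + 1) : L ≃ₐ[K] L) x)
              + q 0 * (σ ^ 0 : L ≃ₐ[K] L) c * (σ ^ 0 : L ≃ₐ[K] L) x :=
          Finset.sum_range_succ' _ (k + 1)
        have h2 : ∑ i ∈ Finset.range (k + 2),
            q i * (σ ^ i : L ≃ₐ[K] L) c * (σ ^ i : L ≃ₐ[K] L) x
            = S + q (k + 1) * (σ ^ (k + 1) : L ≃ₐ[K] L) c * (σ ^ (k + 1) : L ≃ₐ[K] L) x :=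
          Finset.sum_range_succ _ (k + 1)
        rw [hqtop] at h2
        simp only [zero_mul] at h2
        rw [add_zero] at h2
        rw [h2] at h1
        rw [h1]
        ring
      rw [hL, Finset.sum_congr rfl hb', Finset.sum_sub_distrib, hshift]
      simp only [pow_zero, AlgEquiv.one_apply, ← hA]
      ring
    -- evaluate at z to kill the remainder
    have hgz : g z = 0 := by
      rw [hgapp, hc, mul_assoc, inv_mul_cancel₀ hz0, mul_one, sub_self]
    have hz' : opC σ b (k + 1) z = 0 := hzmem
    have hrem : b 0 + q 0 * c = 0 := by
      have := hpt z
      rw [hz', hgz, map_zero, zero_add] at this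
      exact (mul_eq_zero.mp this.symm).resolve_right hz0
    -- factorization
    have hfact : opC σ b (k + 1) = (opC σ q k) ∘ₗ g := by
      apply LinearMap.ext
      intro x
      rw [LinearMap.comp_apply, hpt x, hrem, zero_mul, add_zero]
    -- kernel of g has dimension at most 1
    have hkerg : Module.finrank K (LinearMap.ker g) ≤ 1 := by
      have hle : LinearMap.ker g ≤ K ∙ z := by
        intro x hx
        have hx' : σ x = c * x := by
          have h0 : g x = 0 := hx
          rw [hgapp] at h0
          exact sub_eq_zero.mp h0
        have hσz : σ z ≠ 0 := by
          simpa using hz0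
        have hfix : σ (x * z⁻¹) = x * z⁻¹ := by
          rw [map_mul, map_inv₀, hx', hc]
          field_simp
        have hall : ∀ τ : L ≃ₐ[K] L, τ (x * z⁻¹) = x * z⁻¹ := by
          intro τ
          obtain ⟨m, hm⟩ := hgen τ
          rw [← hm]
          exact fixed_zpow σ hfix m
        have hbot : x * z⁻¹ ∈ (⊥ : IntermediateField K L) := by
          rw [← IsGalois.fixedField_fixingSubgroup (⊥ : IntermediateField K L)]
          intro g'
          exact hall g'.1
        obtain ⟨a, ha⟩ := IntermediateField.mem_bot.mp hbot
        rw [Submodule.mem_span_singleton]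
        refine ⟨a, ?_⟩
        rw [Algebra.smul_def, ha]
        field_simp
      calc Module.finrank K (LinearMap.ker g) ≤ Module.finrank K (K ∙ z) :=
            Submodule.finrank_mono hle
        _ = 1 := finrank_span_singleton hz0
    have hih : Module.finrank K (LinearMap.ker (opC σ q k)) ≤ k := by
      apply ih
      rw [hqk]; exact hb
    calc Module.finrank K (LinearMap.ker (opC σ b (k + 1)))
        = Module.finrank K (LinearMap.ker ((opC σ q k) ∘ₗ g)) := by rw [hfact]
      _ ≤ Module.finrank K (LinearMap.ker (opC σ q k))
            + Module.finrank K (LinearMap.ker g) := finrank_ker_comp_le _ _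
      _ ≤ k + 1 := by omega

/-- for a cyclic extension of degree `n` with Galois group generated by `σ`
and a polynomial `w ∈ L[t]` of degree `k` (`1 ≤ k ≤ n`), the kernel
`R = {x ∈ L : w(σ)x = 0}` (a `K`-subspace of `L`) has dimension at most `k`. -/
theorem statement13 [FiniteDimensional K L] [IsGalois K L]
    (n : ℕ) (hn : Module.finrank K L = n)
    (σ : L ≃ₐ[K] L) (hgen : ∀ τ : L ≃ₐ[K] L, τ ∈ Subgroup.zpowers σ)
    (k : ℕ) (hk1 : 1 ≤ k) (hkn : k ≤ n)
    (w : Polynomial L) (hdeg : w.natDegree = k) (hlead : w.coeff k ≠ 0) :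
    Module.finrank K (LinearMap.ker (polyOp σ w)) ≤ k := by
  have h : polyOp σ w = opC σ w.coeff w.natDegree := rfl
  rw [h, hdeg]
  exact opC_ker_le σ hgen k w.coeff hlead
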